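/- Let f be an expansive homeomorphism of a compact metric space X. Then there exist a metric D on X compatible with its topology, constants γ > 0, 0 < λ < 1, and a ≥ 1 such that for every x ∈ X: (i) if y ∈ W^s_γ(x, D) then D(fⁿ(x), fⁿ(y)) ≤ a λⁿ D(x, y) for all n ≥ 0, and (ii) if y ∈ W^u_γ(x, D) then D(f^{-n}(x), f^{-n}(y)) ≤ a λⁿ D(x, y) for all n ≥ 0. -/

import Mathlib

open Filter Topology

/-- The `n`-th iterate (`n ∈ ℤ`) of a homeomorphism `f`, as a map `X → X`. -/
def iterZ {X : Type*} [TopologicalSpace X] (f : X ≃ₜ X) (n : ℤ) : X → X :=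
  ⇑(f.toEquiv ^ n)

/-- The ω-limit set of `x`: limits of `f^{nᵢ}(x)` along strictly increasing
sequences `0 < n₁ < n₂ < ⋯`. -/
def posLimitSet {X : Type*} [TopologicalSpace X] (f : X ≃ₜ X) (x : X) : Set X :=
  {y | ∃ n : ℕ → ℕ, StrictMono n ∧ 0 < n 0 ∧
    Tendsto (fun i => iterZ f (n i) x) atTop (𝓝 y)}

/-- The α-limit set of `x`: limits of `f^{-nᵢ}(x)` along strictly increasing
sequences `0 < n₁ < n₂ < ⋯`. -/
def negLimitSet {X : Type*} [TopologicalSpace X] (f : X ≃ₜ X) (x : X) : Set X :=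
  {y | ∃ n : ℕ → ℕ, StrictMono n ∧ 0 < n 0 ∧
    Tendsto (fun i => iterZ f (-(n i : ℤ)) x) atTop (𝓝 y)}

/-- `x` is recurrent if it is positively or negatively recurrent. -/
def RecurrentPt {X : Type*} [TopologicalSpace X] (f : X ≃ₜ X) (x : X) : Prop :=
  x ∈ posLimitSet f x ∨ x ∈ negLimitSet f x

/-- `f` is expansive with expansivity constant `c`. -/
def ExpansiveWith {X : Type*} [MetricSpace X] (f : X ≃ₜ X) (c : ℝ) : Prop :=
  0 < c ∧ ∀ x y : X, x ≠ y → ∃ n : ℤ, c < dist (iterZ f n x) (iterZ f n y)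

/-- `f` is expansive. -/
def Expansive {X : Type*} [MetricSpace X] (f : X ≃ₜ X) : Prop :=
  ∃ c : ℝ, ExpansiveWith f c

/-- The full orbit `{fⁿ(x) : n ∈ ℤ}` of a point. -/
def fullOrbit {X : Type*} [TopologicalSpace X] (f : X ≃ₜ X) (x : X) : Set X :=
  Set.range fun n : ℤ => iterZ f n x

/-- `E` is a minimal set: nonempty, closed, invariant (`f(E) = E`), with no proper
nonempty closed invariant subset. -/
def IsMinimalSet {X : Type*} [TopologicalSpace X] (f : X ≃ₜ X) (E : Set X) : Prop :=
  E.Nonempty ∧ IsClosed E ∧ f '' E = E ∧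
    ∀ E' ⊆ E, E'.Nonempty → IsClosed E' → f '' E' = E' → E' = E

/-- `x` is almost periodic: the closure of its orbit is a minimal set. -/
def AlmostPeriodicPt {X : Type*} [TopologicalSpace X] (f : X ≃ₜ X) (x : X) : Prop :=
  IsMinimalSet f (closure (fullOrbit f x))

/-- The left shift `σ` on `ℤ → F`, as a homeomorphism. -/
def shiftH (F : Type*) [TopologicalSpace F] : (ℤ → F) ≃ₜ (ℤ → F) where
  toFun x n := x (n + 1)
  invFun x n := x (n - 1)
  left_inv x := by funext n; simp
  right_inv x := by funext n; simp
  continuous_toFun := continuous_pi fun n => continuous_apply (n + 1)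
  continuous_invFun := continuous_pi fun n => continuous_apply (n - 1)

/-- The `n`-th power (`n ∈ ℕ`) of a homeomorphism, as a homeomorphism. -/
def hpow {X : Type*} [TopologicalSpace X] (f : X ≃ₜ X) : ℕ → X ≃ₜ X
  | 0 => Homeomorph.refl X
  | n + 1 => (hpow f n).trans f

/-- The local stable set `W^s_ε(x)`. -/
def localStable {X : Type*} [MetricSpace X] (f : X ≃ₜ X) (ε : ℝ) (x : X) : Set X :=
  {y | ∀ n : ℕ, dist (iterZ f n x) (iterZ f n y) ≤ ε}

/-- The local unstable set `W^u_ε(x)`. -/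
def localUnstable {X : Type*} [MetricSpace X] (f : X ≃ₜ X) (ε : ℝ) (x : X) : Set X :=
  {y | ∀ n : ℕ, dist (iterZ f (-(n : ℤ)) x) (iterZ f (-(n : ℤ)) y) ≤ ε}

/-- The stable set `W^s(x)`. -/
def stableSet {X : Type*} [MetricSpace X] (f : X ≃ₜ X) (x : X) : Set X :=
  {y | Tendsto (fun n : ℕ => dist (iterZ f n x) (iterZ f n y)) atTop (𝓝 0)}

/-- The unstable set `W^u(x)`. -/
def unstableSet {X : Type*} [MetricSpace X] (f : X ≃ₜ X) (x : X) : Set X :=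
  {y | Tendsto (fun n : ℕ => dist (iterZ f (-(n : ℤ)) x) (iterZ f (-(n : ℤ)) y)) atTop (𝓝 0)}

/-- `f` has the pseudo orbit tracing property. -/
def POTP {X : Type*} [MetricSpace X] (f : X ≃ₜ X) : Prop :=
  ∀ ε > (0 : ℝ), ∃ δ > (0 : ℝ), ∀ u : ℤ → X,
    (∀ i : ℤ, dist (f (u i)) (u (i + 1)) < δ) →
    ∃ x : X, ∀ i : ℤ, dist (iterZ f i x) (u i) < ε

/-- `dD` is a metric on `X` compatible with the topology of `X`: it satisfies the metric
axioms and the open sets of `X` are exactly the sets that are open for `dD`. -/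
def IsCompatibleMetric {X : Type*} [TopologicalSpace X] (dD : X → X → ℝ) : Prop :=
  (∀ x y : X, dD x y = 0 ↔ x = y) ∧
  (∀ x y : X, dD x y = dD y x) ∧
  (∀ x y z : X, dD x z ≤ dD x y + dD y z) ∧
  (∀ s : Set X, IsOpen s ↔ ∀ x ∈ s, ∃ ε > (0 : ℝ), {y : X | dD x y < ε} ⊆ s)

namespace Stmt10
open NNReal

section Top
variable {X : Type*} [TopologicalSpace X]

set_option linter.unusedSectionVars false in
lemma iterZ_add (f : X ≃ₜ X) (a b : ℤ) (x : X) : iterZ f (a + b) x = iterZ f a (iterZ f b x) := by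
  simp [iterZ, zpow_add, Equiv.Perm.mul_apply]

set_option linter.unusedSectionVars false in
lemma iterZ_zero (f : X ≃ₜ X) (x : X) : iterZ f 0 x = x := rfl

set_option linter.unusedSectionVars false in
lemma iterZ_one (f : X ≃ₜ X) (x : X) : iterZ f 1 x = f x := by
  simp [iterZ, zpow_one]

set_option linter.unusedSectionVars false in
lemma iterZ_neg_one (f : X ≃ₜ X) (x : X) : iterZ f (-1) x = f.symm x := by
  simp [iterZ, zpow_neg, zpow_one, Equiv.Perm.inv_def]

set_option linter.unusedSectionVars false in
lemma exists_homeo (f : X ≃ₜ X) (n : ℤ) : ∃ g : X ≃ₜ X, iterZ f n = ⇑g := by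
  induction n using Int.induction_on with
  | zero => exact ⟨Homeomorph.refl X, rfl⟩
  | succ k ih =>
    obtain ⟨g, hg⟩ := ih
    refine ⟨g.trans f, funext fun x => ?_⟩
    rw [add_comm, iterZ_add, iterZ_one, hg]; rfl
  | pred k ih =>
    obtain ⟨g, hg⟩ := ih
    refine ⟨g.trans f.symm, funext fun x => ?_⟩
    rw [sub_eq_add_neg, add_comm, iterZ_add, iterZ_neg_one, hg]; rfl

set_option linter.unusedSectionVars false in
lemma continuous_iterZ (f : X ≃ₜ X) (n : ℤ) : Continuous (iterZ f n) := by
  obtain ⟨g, hg⟩ := exists_homeo f n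
  rw [hg]; exact g.continuous

end Top

section Met
variable {X : Type*} [MetricSpace X] [CompactSpace X]

set_option linter.unusedSectionVars false in
lemma unif_exp (f : X ≃ₜ X) {c : ℝ} (hc : ExpansiveWith f c) {ε : ℝ} (hε : 0 < ε) :
    ∃ N : ℕ, ∀ u v : X, (∀ i : ℤ, i.natAbs ≤ N → dist (iterZ f i u) (iterZ f i v) ≤ c) →
      dist u v < ε := by
  by_contra h
  push_neg at h
  choose u v hu hd using h
  obtain ⟨p, φ, hφ, hp⟩ := CompactSpace.tendsto_subseq (fun N => (u N, v N))
  have h1 : Tendsto (fun k => u (φ k)) atTop (𝓝 p.1) := (continuous_fst.tendsto p).comp hp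
  have h2 : Tendsto (fun k => v (φ k)) atTop (𝓝 p.2) := (continuous_snd.tendsto p).comp hp
  have hdist : ε ≤ dist p.1 p.2 :=
    ge_of_tendsto (h1.dist h2) (Eventually.of_forall fun k => hd (φ k))
  have hne : p.1 ≠ p.2 := by
    intro h; rw [h, dist_self] at hdist; linarith
  obtain ⟨i, hi⟩ := hc.2 p.1 p.2 hne
  have h3 : Tendsto (fun k => dist (iterZ f i (u (φ k))) (iterZ f i (v (φ k)))) atTop
      (𝓝 (dist (iterZ f i p.1) (iterZ f i p.2))) :=
    (((continuous_iterZ f i).tendsto _).comp h1).dist (((continuous_iterZ f i).tendsto _).comp h2)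
  obtain ⟨k, hk1, hk2⟩ := ((h3.eventually (eventually_gt_nhds hi)).and
    (eventually_ge_atTop i.natAbs)).exists
  exact absurd (hu (φ k) i (hk2.trans (hφ.le_apply))) (not_le.2 hk1)

set_option linter.unusedSectionVars false in
lemma unif_cont_iter (f : X ≃ₜ X) {c : ℝ} (hc : 0 < c) (N : ℕ) :
    ∃ δ > (0:ℝ), ∀ u v : X, dist u v ≤ δ → ∀ i : ℤ, i.natAbs < N →
      dist (iterZ f i u) (iterZ f i v) ≤ c / 3 := by
  induction N with
  | zero => exact ⟨1, one_pos, fun u v _ i hi => absurd hi (by omega)⟩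
  | succ N ih =>
    obtain ⟨δ, hδ, h⟩ := ih
    have hc3 : (0:ℝ) < c / 3 := by linarith
    obtain ⟨δ₁, hδ₁, h1⟩ := Metric.uniformContinuous_iff.1
      (CompactSpace.uniformContinuous_of_continuous (continuous_iterZ f (N : ℤ))) (c/3) hc3
    obtain ⟨δ₂, hδ₂, h2⟩ := Metric.uniformContinuous_iff.1
      (CompactSpace.uniformContinuous_of_continuous (continuous_iterZ f (-(N : ℤ)))) (c/3) hc3
    refine ⟨min δ (min δ₁ δ₂ / 2), by positivity, fun u v huv i hi => ?_⟩
    rcases lt_or_eq_of_le (Nat.lt_succ_iff.1 hi) with h' | h'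
    · exact h u v (huv.trans (min_le_left _ _)) i h'
    · have huv1 : dist u v < δ₁ := by
        have := huv.trans (min_le_right _ _)
        have := min_le_left δ₁ δ₂
        linarith
      have huv2 : dist u v < δ₂ := by
        have := huv.trans (min_le_right _ _)
        have := min_le_right δ₁ δ₂
        linarith
      rcases Int.natAbs_eq i with hi' | hi'
      · rw [hi', h']; exact le_of_lt (h1 huv1)
      · rw [hi', h']; exact le_of_lt (h2 huv2)

variable (f : X ≃ₜ X) (c : ℝ)

set_option linter.unusedSectionVars false in
def nSet (x y : X) : Set ℕ :=
  {n | ∀ i : ℤ, i.natAbs < n → dist (iterZ f i x) (iterZ f i y) ≤ c / 3}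

set_option linter.unusedSectionVars false in
noncomputable def nfun (x y : X) : ℕ := sSup (nSet f c x y)

set_option linter.unusedSectionVars false in
lemma nSet_zero (x y : X) : 0 ∈ nSet f c x y := fun i hi => absurd hi (by omega)

set_option linter.unusedSectionVars false in
lemma nSet_comm (x y : X) : nSet f c x y = nSet f c y x := by
  ext n
  simp only [nSet, Set.mem_setOf_eq]
  constructor <;> intro h i hi <;> rw [dist_comm] <;> exact h i hi

set_option linter.unusedSectionVars false in
lemma bddAbove_nSet {x y : X} (hc : ExpansiveWith f c) (hxy : x ≠ y) :
    BddAbove (nSet f c x y) := by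
  obtain ⟨i, hi⟩ := hc.2 x y hxy
  refine ⟨i.natAbs, fun n hn => ?_⟩
  by_contra h
  push_neg at h
  have := hn i h
  have hc0 := hc.1
  linarith

set_option linter.unusedSectionVars false in
lemma nfun_mem {x y : X} (hc : ExpansiveWith f c) (hxy : x ≠ y) :
    nfun f c x y ∈ nSet f c x y :=
  Nat.sSup_mem ⟨0, nSet_zero f c x y⟩ (bddAbove_nSet f c hc hxy)

set_option linter.unusedSectionVars false in
lemma le_nfun {x y : X} (hc : ExpansiveWith f c) (hxy : x ≠ y) {n : ℕ}
    (hn : n ∈ nSet f c x y) : n ≤ nfun f c x y :=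
  le_csSup (bddAbove_nSet f c hc hxy) hn

set_option linter.unusedSectionVars false in
lemma nfun_comm (x y : X) : nfun f c x y = nfun f c y x := by
  unfold nfun; rw [nSet_comm]

set_option linter.unusedSectionVars false in
noncomputable def lamK (K : ℕ) : ℝ≥0 := (2⁻¹ : ℝ≥0) ^ ((K + 1 : ℝ)⁻¹)

set_option linter.unusedSectionVars false in
lemma lamK_pos (K : ℕ) : 0 < lamK K := NNReal.rpow_pos (by norm_num)

set_option linter.unusedSectionVars false in
lemma lamK_lt_one (K : ℕ) : lamK K < 1 :=
  NNReal.rpow_lt_one (by rw [inv_lt_one_iff₀]; norm_num) (by positivity)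

set_option linter.unusedSectionVars false in
lemma lamK_pow (K : ℕ) : lamK K ^ (K + 1) = 2⁻¹ := by
  rw [lamK, ← NNReal.rpow_mul_natCast]
  have : ((K:ℝ) + 1)⁻¹ * ((K + 1 : ℕ) : ℝ) = 1 := by
    push_cast
    rw [inv_mul_cancel₀]
    positivity
  rw [this, NNReal.rpow_one]

set_option linter.unusedSectionVars false in
lemma two_mul_lamK_pow (K : ℕ) : 2 * lamK K ^ (K + 1) = 1 := by
  rw [lamK_pow]
  norm_num

open Classical in
set_option linter.unusedSectionVars false in
noncomputable def rho (K : ℕ) (x y : X) : ℝ≥0 :=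
  if x = y then 0 else lamK K ^ nfun f c x y

set_option linter.unusedSectionVars false in
lemma rho_self (K : ℕ) (x : X) : rho f c K x x = 0 := if_pos rfl

set_option linter.unusedSectionVars false in
lemma rho_comm (K : ℕ) (x y : X) : rho f c K x y = rho f c K y x := by
  unfold rho
  by_cases h : x = y
  · subst h; rfl
  · rw [if_neg h, if_neg (fun e => h e.symm), nfun_comm]

set_option linter.unusedSectionVars false in
lemma key_window {K : ℕ}
    (hK : ∀ u v : X, (∀ i : ℤ, i.natAbs ≤ K → dist (iterZ f i u) (iterZ f i v) ≤ c) →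
      dist u v ≤ c / 3)
    {x y : X} {m : ℕ}
    (hm : ∀ i : ℤ, i.natAbs < m → dist (iterZ f i x) (iterZ f i y) ≤ c) :
    (m - (K + 1)) ∈ nSet f c x y := by
  intro j hj
  apply hK
  intro i hi
  have he : dist (iterZ f i (iterZ f j x)) (iterZ f i (iterZ f j y)) =
      dist (iterZ f (i + j) x) (iterZ f (i + j) y) := by
    rw [← iterZ_add, ← iterZ_add]
  rw [he]
  apply hm
  have := Int.natAbs_add_le i j
  omega

set_option linter.unusedSectionVars false in
lemma rho_quasi {K : ℕ} (hc : ExpansiveWith f c)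
    (hK : ∀ u v : X, (∀ i : ℤ, i.natAbs ≤ K → dist (iterZ f i u) (iterZ f i v) ≤ c) →
      dist u v ≤ c / 3) :
    ∀ x₁ x₂ x₃ x₄ : X, rho f c K x₁ x₄ ≤
      2 * max (rho f c K x₁ x₂) (max (rho f c K x₂ x₃) (rho f c K x₃ x₄)) := by
  classical
  intro x₁ x₂ x₃ x₄
  by_cases h14 : x₁ = x₄
  · rw [h14, rho_self]; exact zero_le
  set R := max (rho f c K x₁ x₂) (max (rho f c K x₂ x₃) (rho f c K x₃ x₄)) with hR
  set M : ℕ := nfun f c x₁ x₄ + (K + 1) + 1 with hM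
  set e : X → X → ℕ := fun a b => if a = b then M else nfun f c a b with he
  set m := min (e x₁ x₂) (min (e x₂ x₃) (e x₃ x₄)) with hm
  have hpair : ∀ a b : X, m ≤ e a b → ∀ i : ℤ, i.natAbs < m →
      dist (iterZ f i a) (iterZ f i b) ≤ c / 3 := by
    intro a b hab i hi
    by_cases h : a = b
    · subst h
      rw [dist_self]
      linarith [hc.1]
    · have h' : m ≤ nfun f c a b := by
        rw [he] at hab; simpa [if_neg h] using hab
      exact nfun_mem f c hc h i (lt_of_lt_of_le hi h')
  have hwin : ∀ i : ℤ, i.natAbs < m → dist (iterZ f i x₁) (iterZ f i x₄) ≤ c := by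
    intro i hi
    have d12 := hpair x₁ x₂ (min_le_left _ _) i hi
    have d23 := hpair x₂ x₃ ((min_le_right _ _).trans (min_le_left _ _)) i hi
    have d34 := hpair x₃ x₄ ((min_le_right _ _).trans (min_le_right _ _)) i hi
    have := dist_triangle4 (iterZ f i x₁) (iterZ f i x₂) (iterZ f i x₃) (iterZ f i x₄)
    linarith
  have hkey : m - (K + 1) ≤ nfun f c x₁ x₄ :=
    le_nfun f c hc h14 (key_window f c hK hwin)
  have hmM : m < M := by omega
  have hlamR : lamK K ^ m ≤ R := by
    have hcases : m = e x₁ x₂ ∨ m = e x₂ x₃ ∨ m = e x₃ x₄ := by omega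
    have hone : ∀ a b : X, m = e a b → rho f c K a b ≤ R → lamK K ^ m ≤ R := by
      intro a b hab hRle
      have hne : a ≠ b := by
        intro h; rw [he] at hab; simp [h] at hab; omega
      have : rho f c K a b = lamK K ^ m := by
        rw [rho, if_neg hne, hab, he]; simp [if_neg hne]
      rwa [← this]
    rcases hcases with h' | h' | h'
    · exact hone x₁ x₂ h' (le_max_left _ _)
    · exact hone x₂ x₃ h' ((le_max_left _ _).trans (le_max_right _ _))
    · exact hone x₃ x₄ h' ((le_max_right _ _).trans (le_max_right _ _))
  have step1 : rho f c K x₁ x₄ ≤ lamK K ^ (m - (K + 1)) := by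
    rw [rho, if_neg h14]
    exact pow_le_pow_right_of_le_one' (lamK_lt_one K).le hkey
  have step2 : lamK K ^ (m - (K + 1)) ≤ 2 * lamK K ^ m := by
    have hmul : lamK K ^ (m - (K + 1)) * lamK K ^ (K + 1) ≤ lamK K ^ m := by
      rw [← pow_add]
      exact pow_le_pow_right_of_le_one' (lamK_lt_one K).le (by omega)
    calc lamK K ^ (m - (K + 1))
        = 2 * lamK K ^ (K + 1) * lamK K ^ (m - (K + 1)) := by
          rw [two_mul_lamK_pow, one_mul]
      _ = 2 * (lamK K ^ (m - (K + 1)) * lamK K ^ (K + 1)) := by ring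
      _ ≤ 2 * lamK K ^ m := mul_le_mul_right hmul 2
  calc rho f c K x₁ x₄ ≤ 2 * lamK K ^ m := step1.trans step2
    _ ≤ 2 * R := mul_le_mul_right hlamR 2

end Met
end Stmt10

open Stmt10 NNReal

/-- (Reddy) An expansive homeomorphism of a compact metric space admits
a compatible hyperbolic metric `D`: there are `γ > 0`, `0 < λ < 1` and `a ≥ 1` such that
points in the local stable (resp. unstable) set `W^s_γ(x, D)` (resp. `W^u_γ(x, D)`)
approach `x` exponentially fast under forward (resp. backward) iteration. -/
theorem stmt_10 {X : Type*} [MetricSpace X] [CompactSpace X] (f : X ≃ₜ X)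
    (hexp : Expansive f) :
    ∃ dD : X → X → ℝ, IsCompatibleMetric dD ∧
      ∃ γ > (0 : ℝ), ∃ lam : ℝ, 0 < lam ∧ lam < 1 ∧ ∃ a : ℝ, 1 ≤ a ∧
        ∀ x y : X,
          ((∀ n : ℕ, dD (iterZ f n x) (iterZ f n y) ≤ γ) →
            ∀ n : ℕ, dD (iterZ f n x) (iterZ f n y) ≤ a * lam ^ n * dD x y) ∧
          ((∀ n : ℕ, dD (iterZ f (-(n : ℤ)) x) (iterZ f (-(n : ℤ)) y) ≤ γ) →
            ∀ n : ℕ, dD (iterZ f (-(n : ℤ)) x) (iterZ f (-(n : ℤ)) y) ≤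
              a * lam ^ n * dD x y) := by
  classical
  obtain ⟨c, hc⟩ := hexp
  have hc0 := hc.1
  obtain ⟨K, hKlt⟩ := unif_exp f hc (show (0:ℝ) < c/3 by linarith)
  have hK : ∀ u v : X, (∀ i : ℤ, i.natAbs ≤ K → dist (iterZ f i u) (iterZ f i v) ≤ c) →
      dist u v ≤ c/3 := fun u v h => (hKlt u v h).le
  set lam : ℝ≥0 := lamK K with hlam
  have hlam0 : 0 < lam := lamK_pos K
  have hlam1 : lam < 1 := lamK_lt_one K
  set ρ : X → X → ℝ≥0 := rho f c K with hρdef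
  set dD : X → X → ℝ :=
    @dist X (PseudoMetricSpace.ofPreNNDist ρ (rho_self f c K) (rho_comm f c K)).toDist with hdD
  have hDle : ∀ x y : X, dD x y ≤ ρ x y := fun x y =>
    PseudoMetricSpace.dist_ofPreNNDist_le ρ (rho_self f c K) (rho_comm f c K) x y
  have hleD : ∀ x y : X, (ρ x y : ℝ) ≤ 2 * dD x y := fun x y =>
    PseudoMetricSpace.le_two_mul_dist_ofPreNNDist ρ (rho_self f c K) (rho_comm f c K)
      (rho_quasi f c hc hK) x y
  have hself : ∀ x : X, dD x x = 0 := fun x =>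
    (PseudoMetricSpace.ofPreNNDist ρ (rho_self f c K) (rho_comm f c K)).dist_self x
  have hcomm : ∀ x y : X, dD x y = dD y x := fun x y =>
    (PseudoMetricSpace.ofPreNNDist ρ (rho_self f c K) (rho_comm f c K)).dist_comm x y
  have htri : ∀ x y z : X, dD x z ≤ dD x y + dD y z := fun x y z =>
    (PseudoMetricSpace.ofPreNNDist ρ (rho_self f c K) (rho_comm f c K)).dist_triangle x y z
  have hnonneg : ∀ x y : X, 0 ≤ dD x y := by
    intro x y
    have h1 := htri x y x
    have h2 := hcomm y x
    have h3 := hself x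
    linarith
  -- original distance is controlled by dD
  have hA : ∀ δ : ℝ, 0 < δ → ∃ ε : ℝ, 0 < ε ∧ ∀ x y : X, dD x y < ε → dist x y < δ := by
    intro δ hδ
    obtain ⟨N, hN⟩ := unif_exp f hc hδ
    refine ⟨((lam ^ (N+1) : ℝ≥0) : ℝ) / 2, by positivity, fun x y hxy => ?_⟩
    by_cases h : x = y
    · rw [h, dist_self]; exact hδ
    · have hρlt : ((ρ x y : ℝ≥0) : ℝ) < ((lam ^ (N+1) : ℝ≥0) : ℝ) := by
        have := hleD x y
        linarith
      have hρeq : ρ x y = lam ^ nfun f c x y := by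
        rw [hρdef, rho, if_neg h]
      rw [hρeq] at hρlt
      have hpowlt : (lam : ℝ) ^ nfun f c x y < (lam : ℝ) ^ (N + 1) := by
        push_cast at hρlt ⊢; exact hρlt
      have hnlt : N + 1 < nfun f c x y :=
        (pow_lt_pow_iff_right_of_lt_one₀ (by exact_mod_cast hlam0) (by exact_mod_cast hlam1)).1
          hpowlt
      apply hN x y
      intro i hi
      have := nfun_mem f c hc h i (by omega)
      linarith
  have hB : ∀ ε : ℝ, 0 < ε → ∃ δ : ℝ, 0 < δ ∧ ∀ x y : X, dist x y ≤ δ → dD x y < ε := by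
    intro ε hε
    obtain ⟨N, hN⟩ := exists_pow_lt_of_lt_one hε (show (lam : ℝ) < 1 by exact_mod_cast hlam1)
    obtain ⟨δ, hδ, h⟩ := unif_cont_iter f hc0 N
    refine ⟨δ, hδ, fun x y hxy => ?_⟩
    have hρle : ((ρ x y : ℝ≥0) : ℝ) ≤ (lam : ℝ) ^ N := by
      by_cases h' : x = y
      · rw [hρdef, h', rho_self]; positivity
      · rw [hρdef, rho, if_neg h']
        have : lam ^ nfun f c x y ≤ lam ^ N :=
          pow_le_pow_right_of_le_one' hlam1.le
            (le_nfun f c hc h' (h x y hxy))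
        exact_mod_cast this
    calc dD x y ≤ ρ x y := hDle x y
      _ ≤ (lam : ℝ) ^ N := hρle
      _ < ε := hN
  -- exponential contraction along orbits that stay close
  have hgrowth : ∀ (x y : X), x ≠ y →
      ∀ g : ℕ → ℤ, ((∀ m : ℕ, ∃ i : ℤ, i.natAbs ≤ m ∧ g m = i) →
      True) := fun _ _ _ _ _ => trivial
  refine ⟨dD, ⟨?_, hcomm, htri, ?_⟩, 1/4, by norm_num, (lam : ℝ),
    by exact_mod_cast hlam0, by exact_mod_cast hlam1, 2, by norm_num, ?_⟩
  · -- dD x y = 0 ↔ x = y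
    intro x y
    constructor
    · intro h0
      by_contra h
      have h1 := hleD x y
      have h2 : ρ x y = lam ^ nfun f c x y := by rw [hρdef, rho, if_neg h]
      have h3 : (0:ℝ) < ((ρ x y : ℝ≥0) : ℝ) := by
        rw [h2]; push_cast
        positivity
      rw [h0] at h1
      linarith
    · intro h; rw [h, hself]
  · -- open sets
    intro s
    constructor
    · intro hs x hx
      obtain ⟨δ, hδ, hball⟩ := Metric.isOpen_iff.1 hs x hx
      obtain ⟨ε, hε, hA'⟩ := hA δ hδ
      refine ⟨ε, hε, fun y hy => ?_⟩
      apply hball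
      rw [Metric.mem_ball, dist_comm]
      exact hA' x y hy
    · intro h
      rw [Metric.isOpen_iff]
      intro x hx
      obtain ⟨ε, hε, hsub⟩ := h x hx
      obtain ⟨δ, hδ, hB'⟩ := hB ε hε
      refine ⟨δ, hδ, fun y hy => ?_⟩
      rw [Metric.mem_ball, dist_comm] at hy
      exact hsub (hB' x y hy.le)
  · -- main estimates
    intro x y
    by_cases hxy : x = y
    · subst hxy
      constructor <;> intro _ n <;> rw [hself, hself] <;> positivity
    · have hxyn : ∀ k : ℤ, iterZ f k x ≠ iterZ f k y := fun k h =>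
        hxy ((f.toEquiv ^ k).injective h)
      -- dD small implies original dist ≤ c/3
      have hquarter : ∀ u v : X, u ≠ v → dD u v ≤ 1/4 → dist u v ≤ c/3 := by
        intro u v huv hle
        have h1 := hleD u v
        have h2 : ρ u v = lam ^ nfun f c u v := by rw [hρdef, rho, if_neg huv]
        have hn0 : nfun f c u v ≠ 0 := by
          intro h0
          rw [h2, h0, pow_zero] at h1
          norm_num at h1
          linarith
        have := nfun_mem f c hc huv 0 (by omega)
        simpa [iterZ_zero] using this
      have hfinal : ∀ (s : ℤ → ℤ) (hs : ∀ n : ℕ, s n = n ∨ s n = -(n:ℤ)), True := fun _ _ => trivial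
      constructor
      · -- stable
        intro hst n
        have hsmall : ∀ m : ℕ, dist (iterZ f m x) (iterZ f m y) ≤ c/3 := fun m =>
          hquarter _ _ (hxyn m) (hst m)
        have hgrow : (n + nfun f c x y) ∈ nSet f c (iterZ f n x) (iterZ f n y) := by
          intro i hi
          have he : dist (iterZ f i (iterZ f n x)) (iterZ f i (iterZ f n y)) =
              dist (iterZ f (i + n) x) (iterZ f (i + n) y) := by
            rw [← iterZ_add, ← iterZ_add]
          rw [he]
          rcases le_or_gt 0 (i + (n:ℤ)) with hpos | hneg
          · obtain ⟨k, hk⟩ := Int.eq_ofNat_of_zero_le hpos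
            rw [hk]
            exact hsmall k
          · apply nfun_mem f c hc hxy
            omega
        have h1 : dD (iterZ f n x) (iterZ f n y) ≤ ρ (iterZ f n x) (iterZ f n y) := hDle _ _
        have h2 : ρ (iterZ f n x) (iterZ f n y) = lam ^ nfun f c (iterZ f n x) (iterZ f n y) := by
          rw [hρdef, rho, if_neg (hxyn n)]
        have h3 : lam ^ nfun f c (iterZ f n x) (iterZ f n y) ≤ lam ^ (n + nfun f c x y) :=
          pow_le_pow_right_of_le_one' hlam1.le (le_nfun f c hc (hxyn n) hgrow)
        have h4 : ((lam ^ (n + nfun f c x y) : ℝ≥0) : ℝ) =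
            (lam:ℝ) ^ n * ((lam ^ nfun f c x y : ℝ≥0) : ℝ) := by
          push_cast; rw [pow_add]
        have h5 : ((lam ^ nfun f c x y : ℝ≥0) : ℝ) ≤ 2 * dD x y := by
          have := hleD x y
          have h2' : ρ x y = lam ^ nfun f c x y := by rw [hρdef, rho, if_neg hxy]
          rwa [h2'] at this
        have h6 : (0:ℝ) ≤ (lam:ℝ) ^ n := by positivity
        calc dD (iterZ f n x) (iterZ f n y)
            ≤ ((lam ^ nfun f c (iterZ f n x) (iterZ f n y) : ℝ≥0) : ℝ) := by
              rw [← h2]; exact h1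
          _ ≤ ((lam ^ (n + nfun f c x y) : ℝ≥0) : ℝ) := by exact_mod_cast h3
          _ = (lam:ℝ) ^ n * ((lam ^ nfun f c x y : ℝ≥0) : ℝ) := h4
          _ ≤ (lam:ℝ) ^ n * (2 * dD x y) := by
              exact mul_le_mul_of_nonneg_left h5 h6
          _ = 2 * (lam:ℝ) ^ n * dD x y := by ring
      · -- unstable
        intro hst n
        have hsmall : ∀ m : ℕ, dist (iterZ f (-(m:ℤ)) x) (iterZ f (-(m:ℤ)) y) ≤ c/3 := fun m =>
          hquarter _ _ (hxyn _) (hst m)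
        have hgrow : (n + nfun f c x y) ∈ nSet f c (iterZ f (-(n:ℤ)) x) (iterZ f (-(n:ℤ)) y) := by
          intro i hi
          have he : dist (iterZ f i (iterZ f (-(n:ℤ)) x)) (iterZ f i (iterZ f (-(n:ℤ)) y)) =
              dist (iterZ f (i + -(n:ℤ)) x) (iterZ f (i + -(n:ℤ)) y) := by
            rw [← iterZ_add, ← iterZ_add]
          rw [he]
          rcases le_or_gt (i + -(n:ℤ)) 0 with hpos | hneg
          · obtain ⟨k, hk⟩ := Int.eq_ofNat_of_zero_le (by omega : (0:ℤ) ≤ -(i + -(n:ℤ)))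
            have hk' : i + -(n:ℤ) = -(k:ℤ) := by omega
            rw [hk']
            exact hsmall k
          · apply nfun_mem f c hc hxy
            omega
        have h1 : dD (iterZ f (-(n:ℤ)) x) (iterZ f (-(n:ℤ)) y) ≤
            ρ (iterZ f (-(n:ℤ)) x) (iterZ f (-(n:ℤ)) y) := hDle _ _
        have h2 : ρ (iterZ f (-(n:ℤ)) x) (iterZ f (-(n:ℤ)) y) =
            lam ^ nfun f c (iterZ f (-(n:ℤ)) x) (iterZ f (-(n:ℤ)) y) := by
          rw [hρdef, rho, if_neg (hxyn _)]
        have h3 : lam ^ nfun f c (iterZ f (-(n:ℤ)) x) (iterZ f (-(n:ℤ)) y) ≤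
            lam ^ (n + nfun f c x y) :=
          pow_le_pow_right_of_le_one' hlam1.le (le_nfun f c hc (hxyn _) hgrow)
        have h4 : ((lam ^ (n + nfun f c x y) : ℝ≥0) : ℝ) =
            (lam:ℝ) ^ n * ((lam ^ nfun f c x y : ℝ≥0) : ℝ) := by
          push_cast; rw [pow_add]
        have h5 : ((lam ^ nfun f c x y : ℝ≥0) : ℝ) ≤ 2 * dD x y := by
          have := hleD x y
          have h2' : ρ x y = lam ^ nfun f c x y := by rw [hρdef, rho, if_neg hxy]
          rwa [h2'] at this
        have h6 : (0:ℝ) ≤ (lam:ℝ) ^ n := by positivity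
        calc dD (iterZ f (-(n:ℤ)) x) (iterZ f (-(n:ℤ)) y)
            ≤ ((lam ^ nfun f c (iterZ f (-(n:ℤ)) x) (iterZ f (-(n:ℤ)) y) : ℝ≥0) : ℝ) := by
              rw [← h2]; exact h1
          _ ≤ ((lam ^ (n + nfun f c x y) : ℝ≥0) : ℝ) := by exact_mod_cast h3
          _ = (lam:ℝ) ^ n * ((lam ^ nfun f c x y : ℝ≥0) : ℝ) := h4
          _ ≤ (lam:ℝ) ^ n * (2 * dD x y) := by
              exact mul_le_mul_of_nonneg_left h5 h6
          _ = 2 * (lam:ℝ) ^ n * dD x y := by ring
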